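/- Let E be a finite set, let D be a probability distribution on the subsets of E, and let β : E → ℝ≥0. Suppose that for every subset S ⊆ E one has Pr_{R∼D}[S ∩ R ≠ ∅] ≥ Σ_{i∈S} β(i). Then there exists a randomized selection rule σ assigning to each subset R ⊆ E a random element σ(R) ∈ R ∪ {none} (i.e., a probability distribution on R together with the possibility of selecting nothing), such that (i) for every i ∈ E, Pr_{R∼D}[σ(R) = i] ≥ β(i), and (ii) σ is monotone: for any i ∈ E and any sets S₁ ⊆ S₂ ⊆ E with i ∈ S₁, the probability that σ selects i from S₂ is at most the probability that σ selects i from S₁. -/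

import Mathlib

open Finset

set_option linter.unusedSectionVars false

open Finset

namespace CRSaux

variable {α : Type} [Fintype α] [DecidableEq α]

/-- first element of the list belonging to `S` -/
def sel : List α → Finset α → Option α
  | [], _ => none
  | (a :: l), S => if a ∈ S then some a else sel l S

lemma sel_mem {l : List α} {S : Finset α} {i : α} (h : sel l S = some i) : i ∈ S := by
  induction l with
  | nil => simp [sel] at h
  | cons a l ih =>
    rw [sel] at h
    split at h
    · cases h; assumption
    · exact ih h

lemma sel_mem_list {l : List α} {S : Finset α} {i : α} (h : sel l S = some i) : i ∈ l := by
  induction l with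
  | nil => simp [sel] at h
  | cons a l ih =>
    rw [sel] at h
    split at h
    · exact List.mem_cons.mpr (Or.inl (Option.some_inj.mp h).symm)
    · exact List.mem_cons_of_mem _ (ih h)

lemma sel_mono {l : List α} {S₁ S₂ : Finset α} {i : α} (hi : i ∈ S₁) (hS : S₁ ⊆ S₂)
    (h : sel l S₂ = some i) : sel l S₁ = some i := by
  induction l with
  | nil => simp [sel] at h
  | cons a l ih =>
    rw [sel] at h ⊢
    by_cases ha : a ∈ S₂
    · rw [if_pos ha] at h
      cases h
      rw [if_pos hi]
    · rw [if_neg ha] at h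
      rw [if_neg (fun h' => ha (hS h'))]
      exact ih h

/-- probability that `S` meets a random set -/
def f (D : Finset α → ℝ) (B : Finset α) : ℝ :=
  ∑ R : Finset α, (if (B ∩ R).Nonempty then D R else 0)

/-- weight of the selected element -/
def g (w : α → ℝ) (l : List α) (R : Finset α) : ℝ := (sel l R).elim 0 w

def G (D : Finset α → ℝ) (w : α → ℝ) (B : Finset α) (l : List α) : ℝ :=
  ∑ R : Finset α, (if (B ∩ R).Nonempty then 0 else D R * g w l R)

def hd (w : α → ℝ) : List α → ℝ
  | [] => 0
  | (i :: _) => w i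

lemma f_insert_sub (D : Finset α → ℝ) (B : Finset α) (i : α) :
    f D (insert i B) - f D B
      = ∑ R : Finset α, (if ¬(B ∩ R).Nonempty ∧ i ∈ R then D R else 0) := by
  rw [f, f, ← Finset.sum_sub_distrib]
  refine Finset.sum_congr rfl fun R _ => ?_
  by_cases hi : i ∈ R
  · rw [Finset.insert_inter_of_mem hi]
    by_cases hB : (B ∩ R).Nonempty <;> simp [hB, hi, Finset.insert_nonempty]
  · rw [Finset.insert_inter_of_notMem hi]
    by_cases hB : (B ∩ R).Nonempty <;> simp [hB, hi]

lemma g_cons (w : α → ℝ) (i : α) (l : List α) (R : Finset α) :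
    g w (i :: l) R = if i ∈ R then w i else g w l R := by
  rw [g, sel]
  split <;> simp [g]

lemma G_cons (D : Finset α → ℝ) (w : α → ℝ) (B : Finset α) (i : α) (l : List α) :
    G D w B (i :: l) = w i * (f D (insert i B) - f D B) + G D w (insert i B) l := by
  rw [f_insert_sub, Finset.mul_sum, G, G, ← Finset.sum_add_distrib]
  refine Finset.sum_congr rfl fun R _ => ?_
  rw [g_cons]
  by_cases hB : (B ∩ R).Nonempty
  · have h2 : ((insert i B) ∩ R).Nonempty := by
      obtain ⟨x, hx⟩ := hB
      exact ⟨x, by simp at hx ⊢; tauto⟩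
    simp [hB, h2]
  · by_cases hi : i ∈ R
    · have h2 : ((insert i B) ∩ R).Nonempty := ⟨i, by simp [hi]⟩
      simp [hB, hi, h2]
      ring
    · have h2 : ¬((insert i B) ∩ R).Nonempty := by
        rw [Finset.insert_inter_of_notMem hi]
        exact hB
      simp [hB, hi, h2]

/-- The key Abel-summation inequality. -/
lemma key (D : Finset α → ℝ) (b w : α → ℝ)
    (hfb : ∀ S : Finset α, ∑ i ∈ S, b i ≤ f D S) :
    ∀ l : List α, l.Pairwise (fun a c => w c ≤ w a) → (∀ i ∈ l, 0 < w i) → l.Nodup →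
      ∀ B : Finset α, (∀ i ∈ l, i ∉ B) →
      (l.map (fun i => w i * b i)).sum ≤ G D w B l + (hd w l) * (f D B - ∑ i ∈ B, b i) := by
  intro l
  induction l with
  | nil => intro _ _ _ B _; simp [G, hd, g, sel]
  | cons i l ih =>
    intro hsort hpos hnd B hB
    have hiB : i ∉ B := hB i (List.mem_cons_self)
    have hBi : ∀ j ∈ l, j ∉ insert i B := by
      intro j hj
      simp only [Finset.mem_insert]
      push_neg
      exact ⟨fun h => (List.nodup_cons.mp hnd).1 (h ▸ hj), hB j (List.mem_cons_of_mem _ hj)⟩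
    have IH := ih hsort.of_cons (fun j hj => hpos j (List.mem_cons_of_mem _ hj))
      (List.nodup_cons.mp hnd).2 (insert i B) hBi
    rw [List.map_cons, List.sum_cons, G_cons]
    have hw' : hd w l ≤ w i ∧ 0 ≤ hd w l := by
      cases l with
      | nil => exact ⟨le_of_lt (hpos i (List.mem_cons_self)), le_refl _⟩
      | cons j l' =>
        constructor
        · exact (List.pairwise_cons.mp hsort).1 j List.mem_cons_self
        · exact le_of_lt (hpos j (List.mem_cons_of_mem _ List.mem_cons_self))
    have hbB' : ∑ j ∈ insert i B, b j ≤ f D (insert i B) := hfb _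
    have hsum : ∑ j ∈ insert i B, b j = b i + ∑ j ∈ B, b j := Finset.sum_insert hiB
    have := IH
    simp only [hd] at *
    nlinarith [mul_nonneg (sub_nonneg.mpr hw'.1) (sub_nonneg.mpr (hsum ▸ hbB' : b i + ∑ j ∈ B, b j ≤ f D (insert i B)))]

end CRSaux

namespace CRSaux2
open CRSaux

variable {α : Type} [Fintype α] [DecidableEq α]

noncomputable def σl (l : List α) (R : Finset α) (i : α) : ℝ :=
  if sel l R = some i then 1 else 0

lemma σl_nonneg (l : List α) (R : Finset α) (i : α) : 0 ≤ σl l R i := by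
  rw [σl]; split <;> norm_num

lemma σl_support (l : List α) (R : Finset α) (i : α) (h : i ∉ R) : σl l R i = 0 := by
  rw [σl]
  split
  · exact absurd (sel_mem ‹_›) h
  · rfl

lemma σl_sum_le (l : List α) (R : Finset α) : ∑ i : α, σl l R i ≤ 1 := by
  cases h : sel l R with
  | none => simp [σl, h]
  | some j =>
    simp only [σl, h, Option.some.injEq]
    rw [Finset.sum_congr rfl (fun i _ => by rw [eq_comm])]
    rw [Finset.sum_ite_eq Finset.univ j (fun _ => (1:ℝ))]
    simp

lemma σl_mono (l : List α) (i : α) (S₁ S₂ : Finset α) (h1 : i ∈ S₁) (h2 : S₁ ⊆ S₂) :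
    σl l S₂ i ≤ σl l S₁ i := by
  rw [σl, σl]
  by_cases h : sel l S₂ = some i
  · rw [if_pos h, if_pos (sel_mono h1 h2 h)]
  · rw [if_neg h]; split <;> norm_num

lemma sum_w_σl (w : α → ℝ) (l : List α) (R : Finset α) :
    ∑ i : α, w i * σl l R i = g w l R := by
  rw [g]
  cases h : sel l R with
  | none => simp [σl, h]
  | some j =>
    simp only [σl, h, Option.some.injEq, Option.elim, mul_ite, mul_one, mul_zero]
    rw [Finset.sum_congr rfl (fun i _ => by rw [eq_comm])]
    rw [Finset.sum_ite_eq Finset.univ j w]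
    simp

lemma σl_marg (D : Finset α → ℝ) (w : α → ℝ) (l : List α) :
    ∑ i : α, w i * (∑ R : Finset α, D R * σl l R i) = G D w ∅ l := by
  have : ∀ i, w i * (∑ R : Finset α, D R * σl l R i)
      = ∑ R : Finset α, D R * (w i * σl l R i) := by
    intro i
    rw [Finset.mul_sum]
    exact Finset.sum_congr rfl fun R _ => by ring
  rw [Finset.sum_congr rfl fun i _ => this i, Finset.sum_comm]
  rw [G]
  refine Finset.sum_congr rfl fun R _ => ?_
  rw [← Finset.mul_sum, sum_w_σl]
  simp

end CRSaux2

namespace CRSaux3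
open CRSaux CRSaux2

variable {α : Type} [Fintype α] [DecidableEq α]

abbrev W (α : Type) [Fintype α] [DecidableEq α] := (Finset α → α → ℝ) × (α → ℝ)

def K (α : Type) [Fintype α] [DecidableEq α] : Set (W α) :=
  {p | (∀ R i, 0 ≤ p.1 R i) ∧ (∀ R i, i ∉ R → p.1 R i = 0) ∧
    (∀ R, ∑ i : α, p.1 R i ≤ 1) ∧
    (∀ (i : α) (S₁ S₂ : Finset α), i ∈ S₁ → S₁ ⊆ S₂ → p.1 S₂ i ≤ p.1 S₁ i) ∧
    (∀ i, p.2 i ∈ Set.Icc (0:ℝ) 1)}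

noncomputable def φ (D : Finset α → ℝ) (p : W α) : α → ℝ :=
  fun i => (∑ R : Finset α, D R * p.1 R i) - p.2 i

lemma φ_linear (D : Finset α → ℝ) : IsLinearMap ℝ (φ (α := α) D) := by
  constructor
  · intro p q
    funext i
    simp only [φ, Prod.fst_add, Prod.snd_add, Pi.add_apply]
    rw [Finset.sum_congr rfl fun R (_ : R ∈ Finset.univ) => mul_add (D R) (p.1 R i) (q.1 R i),
      Finset.sum_add_distrib]
    ring
  · intro c p
    funext i
    simp only [φ, Prod.smul_fst, Prod.smul_snd, Pi.smul_apply, smul_eq_mul]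
    rw [Finset.sum_congr rfl fun R (_ : R ∈ Finset.univ) =>
      (by ring : D R * (c * p.1 R i) = c * (D R * p.1 R i)), ← Finset.mul_sum]
    ring

lemma cont1 (R : Finset α) (i : α) : Continuous fun p : W α => p.1 R i :=
  (continuous_apply i).comp ((continuous_apply R).comp continuous_fst)

lemma cont2 (i : α) : Continuous fun p : W α => p.2 i :=
  (continuous_apply i).comp continuous_snd

lemma φ_cont (D : Finset α → ℝ) : Continuous (φ (α := α) D) := by
  refine continuous_pi fun i => Continuous.sub ?_ (cont2 i)
  exact continuous_finset_sum _ fun R _ => continuous_const.mul (cont1 R i)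

lemma K_closed : IsClosed (K α) := by
  have h1 : IsClosed {p : W α | ∀ R i, 0 ≤ p.1 R i} := by
    have : {p : W α | ∀ R i, 0 ≤ p.1 R i} = ⋂ R, ⋂ i, {p : W α | 0 ≤ p.1 R i} := by
      ext p; simp [Set.mem_iInter]
    rw [this]
    exact isClosed_iInter fun R => isClosed_iInter fun i =>
      isClosed_le continuous_const (cont1 R i)
  have h2 : IsClosed {p : W α | ∀ R i, i ∉ R → p.1 R i = 0} := by
    have : {p : W α | ∀ R i, i ∉ R → p.1 R i = 0}
        = ⋂ R, ⋂ i, {p : W α | i ∉ R → p.1 R i = 0} := by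
      ext p; simp [Set.mem_iInter]
    rw [this]
    refine isClosed_iInter fun R => isClosed_iInter fun i => ?_
    by_cases h : i ∈ R
    · have : {p : W α | i ∉ R → p.1 R i = 0} = Set.univ := by
        ext p; simp [h]
      rw [this]; exact isClosed_univ
    · have : {p : W α | i ∉ R → p.1 R i = 0} = {p : W α | p.1 R i = 0} := by
        ext p; simp [h]
      rw [this]; exact isClosed_eq (cont1 R i) continuous_const
  have h3 : IsClosed {p : W α | ∀ R, ∑ i : α, p.1 R i ≤ 1} := by
    have : {p : W α | ∀ R, ∑ i : α, p.1 R i ≤ 1}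
        = ⋂ R, {p : W α | ∑ i : α, p.1 R i ≤ 1} := by
      ext p; simp [Set.mem_iInter]
    rw [this]
    exact isClosed_iInter fun R =>
      isClosed_le (continuous_finset_sum _ fun i _ => cont1 R i) continuous_const
  have h4 : IsClosed {p : W α |
      ∀ (i : α) (S₁ S₂ : Finset α), i ∈ S₁ → S₁ ⊆ S₂ → p.1 S₂ i ≤ p.1 S₁ i} := by
    have : {p : W α | ∀ (i : α) (S₁ S₂ : Finset α), i ∈ S₁ → S₁ ⊆ S₂ → p.1 S₂ i ≤ p.1 S₁ i}
        = ⋂ i, ⋂ S₁, ⋂ S₂,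
          {p : W α | i ∈ S₁ → S₁ ⊆ S₂ → p.1 S₂ i ≤ p.1 S₁ i} := by
      ext p; simp [Set.mem_iInter]
    rw [this]
    refine isClosed_iInter fun i => isClosed_iInter fun S₁ => isClosed_iInter fun S₂ => ?_
    by_cases h : i ∈ S₁ ∧ S₁ ⊆ S₂
    · have : {p : W α | i ∈ S₁ → S₁ ⊆ S₂ → p.1 S₂ i ≤ p.1 S₁ i}
          = {p : W α | p.1 S₂ i ≤ p.1 S₁ i} := by
        ext p; simp [h.1, h.2]
      rw [this]; exact isClosed_le (cont1 S₂ i) (cont1 S₁ i)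
    · have : {p : W α | i ∈ S₁ → S₁ ⊆ S₂ → p.1 S₂ i ≤ p.1 S₁ i} = Set.univ := by
        ext p
        simp only [Set.mem_setOf_eq, Set.mem_univ, iff_true]
        intro h1 h2
        exact absurd ⟨h1, h2⟩ h
      rw [this]; exact isClosed_univ
  have h5 : IsClosed {p : W α | ∀ i, p.2 i ∈ Set.Icc (0:ℝ) 1} := by
    have : {p : W α | ∀ i, p.2 i ∈ Set.Icc (0:ℝ) 1}
        = ⋂ i, {p : W α | p.2 i ∈ Set.Icc (0:ℝ) 1} := by
      ext p; simp [Set.mem_iInter]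
    rw [this]
    refine isClosed_iInter fun i => ?_
    exact IsClosed.preimage (cont2 i) isClosed_Icc
  rw [show K α = {p : W α | ∀ R i, 0 ≤ p.1 R i} ∩ ({p : W α | ∀ R i, i ∉ R → p.1 R i = 0}
      ∩ ({p : W α | ∀ R, ∑ i : α, p.1 R i ≤ 1}
      ∩ ({p : W α | ∀ (i : α) (S₁ S₂ : Finset α), i ∈ S₁ → S₁ ⊆ S₂ → p.1 S₂ i ≤ p.1 S₁ i}
      ∩ {p : W α | ∀ i, p.2 i ∈ Set.Icc (0:ℝ) 1}))) from rfl]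
  exact h1.inter (h2.inter (h3.inter (h4.inter h5)))

lemma K_compact : IsCompact (K α) := by
  have hbig : IsCompact ((Set.univ.pi fun _ : Finset α => Set.univ.pi fun _ : α => Set.Icc (0:ℝ) 1)
      ×ˢ (Set.univ.pi fun _ : α => Set.Icc (0:ℝ) 1)) :=
    IsCompact.prod
      (isCompact_univ_pi fun _ => isCompact_univ_pi fun _ => isCompact_Icc)
      (isCompact_univ_pi fun _ => isCompact_Icc)
  refine hbig.of_isClosed_subset K_closed ?_
  rintro p ⟨h1, _, h3, _, h5⟩
  refine ⟨fun R _ => fun i _ => ⟨h1 R i, ?_⟩, fun i _ => h5 i⟩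
  calc p.1 R i ≤ ∑ j : α, p.1 R j :=
        Finset.single_le_sum (fun j _ => h1 R j) (Finset.mem_univ i)
    _ ≤ 1 := h3 R

lemma K_convex : Convex ℝ (K α) := by
  rintro p ⟨h1, h2, h3, h4, h5⟩ q ⟨g1, g2, g3, g4, g5⟩ a c ha hc hac
  refine ⟨?_, ?_, ?_, ?_, ?_⟩
  · intro R i
    simp only [Prod.smul_fst, Prod.fst_add, Pi.add_apply, Pi.smul_apply, smul_eq_mul]
    have := h1 R i; have := g1 R i
    positivity
  · intro R i hiR
    simp only [Prod.smul_fst, Prod.fst_add, Pi.add_apply, Pi.smul_apply, smul_eq_mul]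
    rw [h2 R i hiR, g2 R i hiR]; ring
  · intro R
    simp only [Prod.smul_fst, Prod.fst_add, Pi.add_apply, Pi.smul_apply, smul_eq_mul]
    rw [Finset.sum_add_distrib, ← Finset.mul_sum, ← Finset.mul_sum]
    calc a * ∑ i : α, p.1 R i + c * ∑ i : α, q.1 R i ≤ a * 1 + c * 1 := by
          gcongr
          · exact h3 R
          · exact g3 R
      _ = 1 := by rw [mul_one, mul_one, hac]
  · intro i S₁ S₂ hi hS
    simp only [Prod.smul_fst, Prod.fst_add, Pi.add_apply, Pi.smul_apply, smul_eq_mul]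
    have := h4 i S₁ S₂ hi hS; have := g4 i S₁ S₂ hi hS
    have h := mul_le_mul_of_nonneg_left (h4 i S₁ S₂ hi hS) ha
    have g := mul_le_mul_of_nonneg_left (g4 i S₁ S₂ hi hS) hc
    linarith
  · intro i
    simp only [Prod.smul_snd, Prod.snd_add, Pi.add_apply, Pi.smul_apply, smul_eq_mul]
    obtain ⟨hl, hr⟩ := h5 i
    obtain ⟨gl, gr⟩ := g5 i
    constructor
    · positivity
    · calc a * p.2 i + c * q.2 i ≤ a * 1 + c * 1 := by gcongr
        _ = 1 := by rw [mul_one, mul_one, hac]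

end CRSaux3

section
open CRSaux CRSaux2 CRSaux3

/-- Contention resolution for one element. `D` is a probability
distribution on subsets of a finite set `α` (given by its mass function), and
`b : α → ℝ≥0` (nonnegative weights). If for every `S ⊆ α` the probability that
`S` meets a random set `R ∼ D` is at least `Σ_{i∈S} b i`, then there is a
(randomized) selection rule `σ` — `σ R i` is the probability of selecting `i`
from the realization `R`, with total mass at most `1` (the remaining mass
selects nothing) and support contained in `R` — such that
(i) `Pr_{R∼D}[σ(R) = i] ≥ b i` for every `i`, and
(ii) `σ` is monotone: for `i ∈ S₁ ⊆ S₂`, the probability of selecting `i` from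
`S₂` is at most that from `S₁`. -/
theorem stmt_0 (α : Type) [Fintype α] [DecidableEq α]
    (D : Finset α → ℝ) (hD0 : ∀ R, 0 ≤ D R) (hD1 : ∑ R : Finset α, D R = 1)
    (b : α → ℝ) (hb0 : ∀ i, 0 ≤ b i)
    (hcov : ∀ S : Finset α,
      ∑ R ∈ Finset.univ.filter (fun R : Finset α => (S ∩ R).Nonempty), D R ≥
        ∑ i ∈ S, b i) :
    ∃ σ : Finset α → α → ℝ,
      (∀ R i, 0 ≤ σ R i) ∧
      (∀ R i, i ∉ R → σ R i = 0) ∧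
      (∀ R, ∑ i : α, σ R i ≤ 1) ∧
      (∀ i : α, ∑ R : Finset α, D R * σ R i ≥ b i) ∧
      (∀ i : α, ∀ S₁ S₂ : Finset α, i ∈ S₁ → S₁ ⊆ S₂ → σ S₂ i ≤ σ S₁ i) := by
  classical
  have hfb : ∀ S : Finset α, ∑ i ∈ S, b i ≤ f D S := by
    intro S
    have h := hcov S
    rw [ge_iff_le, Finset.sum_filter] at h
    exact h
  set M := φ D '' K α with hM
  have hMcomp : IsCompact M := K_compact.image (φ_cont D)
  have hMconv : Convex ℝ M := K_convex.is_linear_image (φ_linear D)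
  by_cases hbM : b ∈ M
  · obtain ⟨p, hpK, hφ⟩ := hbM
    obtain ⟨h1, h2, h3, h4, h5⟩ := hpK
    refine ⟨p.1, h1, h2, h3, ?_, fun i S₁ S₂ => h4 i S₁ S₂⟩
    intro i
    have hbi : b i = (∑ R : Finset α, D R * p.1 R i) - p.2 i := (congrFun hφ i).symm
    have ht := (h5 i).1
    rw [ge_iff_le, hbi]
    linarith
  · exfalso
    obtain ⟨F, u, hFa, hFb⟩ := geometric_hahn_banach_closed_point hMconv hMcomp.isClosed hbM
    set w : α → ℝ := fun i => F (fun j => if i = j then (1:ℝ) else 0) with hw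
    have hF : ∀ x : α → ℝ, F x = ∑ i : α, x i * w i := by
      intro x
      conv_lhs => rw [pi_eq_sum_univ x]
      rw [map_sum]
      refine Finset.sum_congr rfl fun i _ => ?_
      rw [map_smul, smul_eq_mul]
    set P : Finset α := Finset.univ.filter (fun i => 0 < w i) with hP
    set r : α → α → Prop := fun a c => w c ≤ w a with hr
    haveI : DecidableRel r := fun a c => inferInstanceAs (Decidable (w c ≤ w a))
    haveI : IsTotal α r := ⟨fun a c => le_total (w c) (w a)⟩
    haveI : IsTrans α r := ⟨fun a d c h1 h2 => le_trans h2 h1⟩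
    set l : List α := List.insertionSort r P.toList with hl
    have hperm : l.Perm P.toList := List.perm_insertionSort r P.toList
    have hsort : l.Pairwise r := List.pairwise_insertionSort r P.toList
    have hnd : l.Nodup := hperm.nodup_iff.mpr P.nodup_toList
    have hmem : ∀ i, i ∈ l ↔ i ∈ P := fun i => by rw [hperm.mem_iff, Finset.mem_toList]
    have hpos : ∀ i ∈ l, 0 < w i := fun i hi => (Finset.mem_filter.mp ((hmem i).mp hi)).2
    have hltf : l.toFinset = P := by ext i; rw [List.mem_toFinset, hmem]
    set y : α → ℝ := φ D (σl l, 0) with hy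
    have hyM : y ∈ M := ⟨(σl l, 0), ⟨σl_nonneg l, σl_support l, σl_sum_le l,
      fun i S₁ S₂ ha hb => σl_mono l i S₁ S₂ ha hb, fun i => by norm_num⟩, rfl⟩
    have hfempty : f D ∅ = 0 := by simp [f]
    have key0 := key D b w hfb l hsort hpos hnd ∅ (fun i _ => Finset.notMem_empty i)
    rw [Finset.sum_empty, hfempty] at key0
    have e1 : ∑ i : α, b i * w i ≤ ∑ i ∈ P, w i * b i := by
      rw [← Finset.sum_filter_add_sum_filter_not Finset.univ (fun i => 0 < w i)
        (fun i => b i * w i)]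
      have hA : ∑ i ∈ Finset.univ.filter (fun i => 0 < w i), b i * w i
          = ∑ i ∈ P, w i * b i := by
        rw [hP]
        exact Finset.sum_congr rfl fun i _ => mul_comm _ _
      have hB : ∑ i ∈ Finset.univ.filter (fun i => ¬ 0 < w i), b i * w i ≤ 0 := by
        refine Finset.sum_nonpos fun i hi => ?_
        have hwi : w i ≤ 0 := le_of_not_gt (Finset.mem_filter.mp hi).2
        exact mul_nonpos_of_nonneg_of_nonpos (hb0 i) hwi
      linarith
    have e2 : ∑ i ∈ P, w i * b i = (l.map (fun i => w i * b i)).sum := by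
      rw [← hltf, List.sum_toFinset _ hnd]
    have e4 : G D w ∅ l = ∑ i : α, y i * w i := by
      rw [← σl_marg D w l]
      refine Finset.sum_congr rfl fun i _ => ?_
      rw [hy]
      simp only [φ, Pi.zero_apply, sub_zero]
      ring
    have hFy : F y = ∑ i : α, y i * w i := hF y
    have hFbEq : F b = ∑ i : α, b i * w i := hF b
    have hlt : F y < u := hFa y hyM
    rw [hFy, ← e4] at hlt
    rw [hFbEq] at hFb
    linarith

end
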